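/- Let (n, ⟨·,·⟩, φ) be of modified H-type, let T : z → z be the unique linear map with ⟨T z, z'⟩ = B_φ(z, z') for all z, z' ∈ z, let ξ = tr T and m = dim v. For c ∈ ℝ let D_c : n → n be the linear map determined by D_c(z') = (m/4)·T z' + c·z' for z' ∈ z and D_c(x) = (c − ξ/2)·x for x ∈ v. Then there exists c ∈ ℝ such that D_c is a derivation of the Lie algebra n if and only if there exists λ ∈ ℝ such that T([x, y]) = λ·[x, y] for all x, y ∈ v (i.e. the derived algebra [v, v] is contained in a single eigenspace of T); in that case c = (m/4)·λ + ξ works. -/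

import Mathlib

theorem modified_H_type_nilsoliton_iff
    {n : Type*} [LieRing n] [LieAlgebra ℝ n] [FiniteDimensional ℝ n]
    (B : LinearMap.BilinForm ℝ n)
    (hBsymm : ∀ a b : n, B a b = B b a)
    (hBnd : B.Nondegenerate)
    (Z : Submodule ℝ n)
    (hZ : Z = LieSubmodule.toSubmodule (LieAlgebra.center ℝ n))
    (h2step : ∀ a b : n, ⁅a, b⁆ ∈ Z)
    (V : Submodule ℝ n)
    (hV : V = B.orthogonal Z)
    (hZnd : (B.restrict Z).Nondegenerate)
    (hVnd : (B.restrict V).Nondegenerate)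
    (j : Z →ₗ[ℝ] V →ₗ[ℝ] V)
    (hj : ∀ (z : Z) (x y : V), B ⁅(x : n), (y : n)⁆ (z : n) = B (y : n) ((j z x : V) : n))
    (φ : QuadraticForm ℝ Z)
    (hH : ∀ z : Z, (j z) ∘ₗ (j z) = (-(φ z)) • (LinearMap.id : V →ₗ[ℝ] V))
    (T : Z →ₗ[ℝ] Z)
    (hT : ∀ a b : Z, B ((T a : Z) : n) ((b : Z) : n) = (φ (a + b) - φ a - φ b) / 2)
    (ξ : ℝ) (hξ : ξ = LinearMap.trace ℝ Z T)
    (m : ℕ) (hm : m = Module.finrank ℝ V) :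
    ((∃ c : ℝ, ∃ D : n →ₗ[ℝ] n,
        (∀ z : Z, D (z : n) = ((m : ℝ) / 4) • ((T z : Z) : n) + c • (z : n)) ∧
        (∀ x : V, D (x : n) = (c - ξ / 2) • (x : n)) ∧
        (∀ a b : n, D ⁅a, b⁆ = ⁅D a, b⁆ + ⁅a, D b⁆)) ↔
      (∃ lam : ℝ, ∀ x y : V,
        T ⟨⁅(x : n), (y : n)⁆, h2step x y⟩ = lam • ⟨⁅(x : n), (y : n)⁆, h2step x y⟩)) ∧
    (∀ lam : ℝ,
      (∀ x y : V,
        T ⟨⁅(x : n), (y : n)⁆, h2step x y⟩ = lam • ⟨⁅(x : n), (y : n)⁆, h2step x y⟩) →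
      ∃ D : n →ₗ[ℝ] n,
        (∀ z : Z, D (z : n) =
          ((m : ℝ) / 4) • ((T z : Z) : n) + ((m : ℝ) / 4 * lam + ξ) • (z : n)) ∧
        (∀ x : V, D (x : n) = ((m : ℝ) / 4 * lam + ξ - ξ / 2) • (x : n)) ∧
        (∀ a b : n, D ⁅a, b⁆ = ⁅D a, b⁆ + ⁅a, D b⁆)) := by
  -- elements of Z are central
  have hcent : ∀ z : n, z ∈ Z → ∀ x : n, ⁅z, x⁆ = 0 ∧ ⁅x, z⁆ = 0 := by
    intro z hz x
    rw [hZ] at hz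
    have h1 : ⁅x, z⁆ = 0 := hz x
    have h2 : ⁅z, x⁆ = 0 := by
      rw [← lie_skew, h1, neg_zero]
    exact ⟨h2, h1⟩
  have hrefl : B.IsRefl := fun x y h => (hBsymm y x).trans h
  have hcompl : IsCompl Z V := by
    rw [hV]
    exact LinearMap.BilinForm.isCompl_orthogonal_of_restrict_nondegenerate hrefl hZnd
  set pZ := Z.linearProjOfIsCompl V hcompl with hpZ
  set pV := V.linearProjOfIsCompl Z hcompl.symm with hpV
  -- key construction
  have key : ∀ (c lam : ℝ), ((m : ℝ) / 4 * lam + ξ = c) →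
      (∀ x y : V, T ⟨⁅(x : n), (y : n)⁆, h2step x y⟩
          = lam • (⟨⁅(x : n), (y : n)⁆, h2step x y⟩ : Z)) →
      ∃ D : n →ₗ[ℝ] n,
        (∀ z : Z, D (z : n) = ((m : ℝ) / 4) • ((T z : Z) : n) + c • (z : n)) ∧
        (∀ x : V, D (x : n) = (c - ξ / 2) • (x : n)) ∧
        (∀ a b : n, D ⁅a, b⁆ = ⁅D a, b⁆ + ⁅a, D b⁆) := by
    intro c lam hc heig
    have hzl : ∀ (z : Z) (x : n), ⁅(z : n), x⁆ = 0 := fun z x => (hcent _ z.2 x).1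
    have hzr : ∀ (z : Z) (x : n), ⁅x, (z : n)⁆ = 0 := fun z x => (hcent _ z.2 x).2
    set D : n →ₗ[ℝ] n :=
      Z.subtype ∘ₗ (((m : ℝ) / 4) • T + c • LinearMap.id) ∘ₗ pZ
        + (c - ξ / 2) • (V.subtype ∘ₗ pV) with hD
    have h1 : ∀ z : Z, D (z : n) = ((m : ℝ) / 4) • ((T z : Z) : n) + c • (z : n) := by
      intro z
      have e1 : pZ (z : n) = z := Submodule.linearProjOfIsCompl_apply_left hcompl z
      have e2 : pV (z : n) = 0 :=
        Submodule.linearProjOfIsCompl_apply_right' hcompl.symm z.2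
      simp [hD, e1, e2]
    have h2 : ∀ x : V, D (x : n) = (c - ξ / 2) • (x : n) := by
      intro x
      have e1 : pV (x : n) = x := Submodule.linearProjOfIsCompl_apply_left hcompl.symm x
      have e2 : pZ (x : n) = 0 :=
        Submodule.linearProjOfIsCompl_apply_right' hcompl x.2
      simp [hD, e1, e2]
    refine ⟨D, h1, h2, ?_⟩
    intro a b
    have ha : ((pZ a : n)) + (pV a : n) = a :=
      Submodule.projection_add_projection_eq_self hcompl a
    have hb : ((pZ b : n)) + (pV b : n) = b :=
      Submodule.projection_add_projection_eq_self hcompl b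
    have hbr : ⁅a, b⁆ = ⁅(pV a : n), (pV b : n)⁆ := by
      conv_lhs => rw [← ha, ← hb]
      rw [add_lie, lie_add, lie_add, hzl (pZ a) (pZ b : n), hzl (pZ a) (pV b : n),
        hzr (pZ b) (pV a : n)]
      abel
    set w : Z := ⟨⁅(pV a : n), (pV b : n)⁆, h2step _ _⟩ with hw
    have hDw : D ⁅a, b⁆ = (2 * c - ξ) • (w : n) := by
      have h' : D ⁅a, b⁆ = D (w : n) := by rw [hbr]
      rw [h', h1 w, heig (pV a) (pV b), ← hw]
      push_cast [smul_smul]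
      rw [← add_smul]
      congr 1
      linarith
    have hDa : ⁅D a, b⁆ = (c - ξ / 2) • (w : n) := by
      conv_lhs => rw [← ha]
      rw [map_add, h1 (pZ a), h2 (pV a), add_lie, add_lie, smul_lie, smul_lie, smul_lie,
        hzl (T (pZ a)) b, hzl (pZ a) b]
      conv_lhs => rw [← hb]
      rw [lie_add, hzr (pZ b) (pV a : n)]
      simp [hw]
    have hDb : ⁅a, D b⁆ = (c - ξ / 2) • (w : n) := by
      conv_lhs => rw [← hb]
      rw [map_add, h1 (pZ b), h2 (pV b), lie_add, lie_add, lie_smul, lie_smul, lie_smul,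
        hzr (T (pZ b)) a, hzr (pZ b) a]
      conv_lhs => rw [← ha]
      rw [add_lie, hzl (pZ a) (pV b : n)]
      simp [hw]
    rw [hDw, hDa, hDb, ← add_smul]
    congr 1
    ring
  constructor
  · constructor
    · rintro ⟨c, D, hDZ, hDV, hder⟩
      rcases eq_or_ne m 0 with hm0 | hm0
      · have hVbot : V = ⊥ := Submodule.finrank_eq_zero.mp (by omega)
        refine ⟨0, fun x y => ?_⟩
        have hx : (x : n) = 0 := (Submodule.eq_bot_iff V).mp hVbot _ x.2
        have hz : (⟨⁅(x : n), (y : n)⁆, h2step x y⟩ : Z) = 0 := by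
          apply Subtype.ext
          simp [hx]
        rw [hz]
        simp
      · refine ⟨4 * (c - ξ) / m, fun x y => ?_⟩
        set w : Z := ⟨⁅(x : n), (y : n)⁆, h2step x y⟩ with hw
        have hder' := hder (x : n) (y : n)
        have hL : D ⁅(x : n), (y : n)⁆ = ((m : ℝ) / 4) • ((T w : Z) : n) + c • (w : n) := by
          have h' : ⁅(x : n), (y : n)⁆ = (w : n) := rfl
          rw [h', hDZ w]
        have hR : ⁅D (x : n), (y : n)⁆ + ⁅(x : n), D (y : n)⁆ = (2 * c - ξ) • (w : n) := by
          rw [hDV x, hDV y, smul_lie, lie_smul, ← add_smul]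
          have h' : ⁅(x : n), (y : n)⁆ = (w : n) := rfl
          rw [h']
          congr 1
          ring
        rw [hL, hR] at hder'
        have heq : ((m : ℝ) / 4) • ((T w : Z) : n) = (c - ξ) • (w : n) := by
          have h' : ((m : ℝ) / 4) • ((T w : Z) : n) = (2 * c - ξ) • (w : n) - c • (w : n) := by
            rw [← hder']; abel
          rw [h', ← sub_smul]
          congr 1
          ring
        have heqZ : ((m : ℝ) / 4) • T w = (c - ξ) • w := by
          apply Subtype.ext
          push_cast
          exact heq
        have hmne : (m : ℝ) ≠ 0 := Nat.cast_ne_zero.mpr hm0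
        have h4 : T w = ((4 : ℝ) / m) • (((m : ℝ) / 4) • T w) := by
          rw [smul_smul]
          field_simp
          rw [one_smul]
        rw [h4, heqZ, smul_smul]
        congr 1
        field_simp
        
    · rintro ⟨lam, heig⟩
      exact ⟨(m : ℝ) / 4 * lam + ξ, key _ lam rfl heig⟩
  · intro lam heig
    exact key ((m : ℝ) / 4 * lam + ξ) lam rfl heig
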